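/- Let (xᵢ)_{i∈ℤ} be an increasing sequence in ℝ, let J = [A, B] ⊂ (0, 1/2] be an interval with 0 < A < B, and suppose there is α > 0 such that xᵢ₊₁ - xᵢ₋₁ ≥ α xᵢ whenever xᵢ ∈ [0, 1/2]. Partition J into M subintervals J^k = [σ^k A, σ^{k+1} A] where σ = (B/A)^{1/M} and M is chosen so that 1 ≤ log σ ≤ 2. Then the number of indices i with xᵢ ∈ J is at most 2M(σ-1)/α + 2M ≤ M(2(e²-1)/α + 2). -/
import Mathlib


open Real

/-- A finset of integers in which any two elements are within distance 1
has at most two elements. -/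
lemma finset_pair_card (s : Finset ℤ) (h : ∀ i ∈ s, ∀ j ∈ s, i < j → j ≤ i + 1) :
    s.card ≤ 2 := by
  by_contra hcon
  push_neg at hcon
  obtain ⟨a, b, c, ha, hb, hc, hab, hac, hbc⟩ := Finset.two_lt_card_iff.mp hcon
  have h1 : a < b → b ≤ a + 1 := h a ha b hb
  have h2 : b < a → a ≤ b + 1 := h b hb a ha
  have h3 : a < c → c ≤ a + 1 := h a ha c hc
  have h4 : c < a → a ≤ c + 1 := h c hc a ha
  have h5 : b < c → c ≤ b + 1 := h b hb c hc
  have h6 : c < b → b ≤ c + 1 := h c hc b hb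
  omega

/-- A set of integers in which any two elements are within distance 1 is finite
with at most 2 elements. -/
lemma set_pair_count (F : Set ℤ) (h : ∀ i ∈ F, ∀ j ∈ F, i < j → j ≤ i + 1) :
    F.Finite ∧ F.ncard ≤ 2 := by
  rcases F.eq_empty_or_nonempty with hF | ⟨i₀, hi₀⟩
  · subst hF; simp
  have hsub : F ⊆ Set.Icc (i₀ - 1) (i₀ + 1) := by
    intro j hj
    rcases lt_trichotomy j i₀ with hlt | heq | hgt
    · have := h j hj i₀ hi₀ hlt; constructor <;> omega
    · subst heq; constructor <;> omega
    · have := h i₀ hi₀ j hj hgt; constructor <;> omega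
  have hfin : F.Finite := (Set.finite_Icc _ _).subset hsub
  refine ⟨hfin, ?_⟩
  rw [Set.ncard_eq_toFinset_card F hfin]
  apply finset_pair_card
  intro i hi j hj
  exact h i (by simpa using hi) j (by simpa using hj)

/-- A set of integers with no two distinct elements is finite with at most 1 element. -/
lemma set_single_count (F : Set ℤ) (h : ∀ i ∈ F, ∀ j ∈ F, i < j → False) :
    F.Finite ∧ F.ncard ≤ 1 := by
  have hsub : F.Subsingleton := by
    intro i hi j hj
    rcases lt_trichotomy i j with hlt | heq | hgt
    · exact absurd (h i hi j hj hlt) (by simp)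
    · exact heq
    · exact absurd (h j hj i hi hgt) (by simp)
  exact ⟨hsub.finite, Set.ncard_le_one_iff (hs := hsub.finite) |>.mpr
    fun ha hb => hsub ha hb⟩

/-- Counting lemma for `c`-spaced sets: if `f` maps `T` into `[a + c, b]` and
`f j ≥ f i + c` whenever `i, j ∈ T` with `j ≥ i + 2`, then
`T` is finite with at most `2 (b - a) / c` elements. -/
lemma spaced_count (T : Set ℤ) (f : ℤ → ℝ) (a b c : ℝ) (hc : 0 < c) (hab : a ≤ b)
    (hbound : ∀ i ∈ T, a + c ≤ f i ∧ f i ≤ b)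
    (hspace : ∀ i ∈ T, ∀ j ∈ T, i + 2 ≤ j → f i + c ≤ f j) :
    T.Finite ∧ (T.ncard : ℝ) ≤ 2 * (b - a) / c := by
  classical
  set φ : ℤ → ℤ := fun i => ⌊(f i - a) / c⌋ with hφ
  set m : ℤ := ⌊(b - a) / c⌋ with hm
  -- φ maps T into Icc 1 m
  have hmem : ∀ i ∈ T, φ i ∈ Finset.Icc (1 : ℤ) m := by
    intro i hi
    obtain ⟨hlo, hhi⟩ := hbound i hi
    rw [Finset.mem_Icc]
    constructor
    · rw [hφ]; simp only [Int.le_floor]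
      rw [le_div_iff₀ hc]; push_cast; linarith
    · exact Int.floor_le_floor ((div_le_div_iff_of_pos_right hc).mpr (by linarith))
  -- fibers of φ on T are "pair" sets
  have hfiber : ∀ i ∈ T, ∀ j ∈ T, φ i = φ j → i < j → j ≤ i + 1 := by
    intro i hi j hj hφij hij
    by_contra hcon
    push_neg at hcon
    have hsp := hspace i hi j hj (by omega)
    have : φ i + 1 ≤ φ j := by
      rw [hφ]
      simp only
      calc ⌊(f i - a) / c⌋ + 1 = ⌊(f i - a) / c + 1⌋ := (Int.floor_add_one _).symm
        _ ≤ ⌊(f j - a) / c⌋ := Int.floor_le_floor (by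
            rw [div_add' _ _ _ (ne_of_gt hc)]
            exact (div_le_div_iff_of_pos_right hc).mpr (by linarith))
    omega
  -- finiteness
  have hfin : T.Finite := by
    have hcover : T ⊆ ⋃ v ∈ Finset.Icc (1 : ℤ) m, {i ∈ T | φ i = v} := by
      intro i hi
      simp only [Set.mem_iUnion]
      exact ⟨φ i, hmem i hi, hi, rfl⟩
    refine Set.Finite.subset (Set.Finite.biUnion (Finset.Icc (1:ℤ) m).finite_toSet
      fun v _ => ?_) hcover
    exact (set_pair_count {i ∈ T | φ i = v}
      (fun i hi j hj hij => hfiber i hi.1 j hj.1 (hi.2.trans hj.2.symm) hij)).1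
  refine ⟨hfin, ?_⟩
  -- cardinality bound
  have hcard : T.ncard ≤ 2 * m.toNat := by
    rw [Set.ncard_eq_toFinset_card T hfin]
    set s := hfin.toFinset with hs
    have h1 : s.card ≤ 2 * (s.image φ).card := by
      apply Finset.card_le_mul_card_image
      intro v _
      apply finset_pair_card
      intro i hi j hj hij
      simp only [Finset.mem_filter, hs, Set.Finite.mem_toFinset] at hi hj
      exact hfiber i hi.1 j hj.1 (hi.2.trans hj.2.symm) hij
    have h2 : (s.image φ).card ≤ m.toNat := by
      have : s.image φ ⊆ Finset.Icc 1 m := by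
        intro v hv
        obtain ⟨i, hi, rfl⟩ := Finset.mem_image.mp hv
        exact hmem i (by simpa [hs] using hi)
      calc (s.image φ).card ≤ (Finset.Icc (1:ℤ) m).card := Finset.card_le_card this
        _ = (m + 1 - 1).toNat := Int.card_Icc _ _
        _ = m.toNat := by ring_nf
    omega
  have hmle : (m.toNat : ℝ) ≤ (b - a) / c := by
    rcases le_or_gt 0 m with hm0 | hm0
    · calc (m.toNat : ℝ) = (m : ℝ) := by
            rw [← Int.cast_natCast (R := ℝ), Int.toNat_of_nonneg hm0]
        _ ≤ (b - a) / c := Int.floor_le _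
    · rw [Int.toNat_of_nonpos hm0.le]
      simp only [Int.cast_zero, Nat.cast_zero]
      exact div_nonneg (by linarith) hc.le
  calc (T.ncard : ℝ) ≤ 2 * (m.toNat : ℝ) := by exact_mod_cast hcard
    _ ≤ 2 * ((b - a) / c) := by linarith
    _ = 2 * (b - a) / c := by ring

/-- Bounding the size of a finite union by the sum of bounds. -/
lemma union_count (n : ℕ) (f : ℕ → Set ℤ) (g : ℕ → ℝ)
    (h : ∀ k < n, (f k).Finite ∧ ((f k).ncard : ℝ) ≤ g k) :
    (⋃ k ∈ Finset.range n, f k).Finite ∧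
      ((⋃ k ∈ Finset.range n, f k).ncard : ℝ) ≤ ∑ k ∈ Finset.range n, g k := by
  induction n with
  | zero => simp
  | succ n ih =>
    obtain ⟨hfin, hcard⟩ := ih (fun k hk => h k (by omega))
    obtain ⟨hfn, hcn⟩ := h n (by omega)
    have heq : (⋃ k ∈ Finset.range (n+1), f k) = (⋃ k ∈ Finset.range n, f k) ∪ f n := by
      rw [Finset.range_add_one, Finset.set_biUnion_insert]
      exact Set.union_comm _ _
    rw [heq, Finset.sum_range_succ]
    refine ⟨hfin.union hfn, ?_⟩
    calc (((⋃ k ∈ Finset.range n, f k) ∪ f n).ncard : ℝ)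
        ≤ ((⋃ k ∈ Finset.range n, f k).ncard : ℝ) + ((f n).ncard : ℝ) := by
          exact_mod_cast Set.ncard_union_le _ _
      _ ≤ ∑ k ∈ Finset.range n, g k + g n := by linarith

/-- Counting lemma: an increasing sequence with gaps `xᵢ₊₁ - xᵢ₋₁ ≥ α xᵢ` on
`[0, 1/2]` has at most `2M(σ-1)/α + 2M ≤ M(2(e²-1)/α + 2)` points in `J = [A,B]`,
where `σ = (B/A)^{1/M}` with `1 ≤ log σ ≤ 2`. -/
theorem counting_lemma
    (x : ℤ → ℝ) (hx : StrictMono x)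
    (A B α : ℝ) (hA : 0 < A) (hAB : A < B) (hB : B ≤ 1 / 2) (hα : 0 < α)
    (hgap : ∀ i : ℤ, x i ∈ Set.Icc (0 : ℝ) (1 / 2) → α * x i ≤ x (i + 1) - x (i - 1))
    (M : ℕ) (hM : 0 < M) (σ : ℝ) (hσ : σ = (B / A) ^ ((1 : ℝ) / (M : ℝ)))
    (hlog1 : 1 ≤ Real.log σ) (hlog2 : Real.log σ ≤ 2) :
    {i : ℤ | x i ∈ Set.Icc A B}.Finite ∧
    ({i : ℤ | x i ∈ Set.Icc A B}.ncard : ℝ) ≤ 2 * (M : ℝ) * (σ - 1) / α + 2 * (M : ℝ) ∧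
    2 * (M : ℝ) * (σ - 1) / α + 2 * (M : ℝ) ≤
      (M : ℝ) * (2 * (Real.exp 2 - 1) / α + 2) := by
  classical
  have hBA : (1 : ℝ) < B / A := (one_lt_div hA).mpr hAB
  have hσpos : 0 < σ := by rw [hσ]; positivity
  have hσ1 : 1 < σ := by
    by_contra hcon
    push_neg at hcon
    have := Real.log_nonpos hσpos.le hcon
    linarith
  have hσe : σ ≤ Real.exp 2 := by
    calc σ = Real.exp (Real.log σ) := (Real.exp_log hσpos).symm
      _ ≤ Real.exp 2 := Real.exp_le_exp.mpr hlog2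
  have hσM : σ ^ M = B / A := by
    rw [hσ, ← Real.rpow_natCast ((B / A) ^ ((1:ℝ)/(M:ℝ))) M,
      ← Real.rpow_mul (by positivity)]
    rw [one_div_mul_cancel (by exact_mod_cast hM.ne'), Real.rpow_one]
  -- the partition points
  set p : ℕ → ℝ := fun k => σ ^ k * A with hp
  have hppos : ∀ k, 0 < p k := fun k => by rw [hp]; positivity
  have hp0 : p 0 = A := by simp [hp]
  have hpM : p M = B := by
    rw [hp]; simp only [hσM]; field_simp
  have hpmono : ∀ k, p k < p (k + 1) := by
    intro k
    rw [hp]; simp only [pow_succ]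
    have h1 : 0 < σ ^ k * A := by positivity
    nlinarith
  -- the sets
  set S : Set ℤ := {i : ℤ | x i ∈ Set.Icc A B} with hS
  set T : ℕ → Set ℤ := fun k =>
    {i : ℤ | x i ∈ Set.Icc A B ∧ p k ≤ x (i - 1) ∧ x (i + 1) ≤ p (k + 1)} with hT
  set U : ℕ → Set ℤ := fun k =>
    {i : ℤ | x i ∈ Set.Icc A B ∧ x (i - 1) < p k ∧ p k < x (i + 1)} with hU
  -- gap estimate for elements of S
  have hgap' : ∀ i : ℤ, x i ∈ Set.Icc A B → α * x i ≤ x (i + 1) - x (i - 1) := by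
    intro i hi
    exact hgap i ⟨le_trans hA.le hi.1, le_trans hi.2 hB⟩
  -- cover
  have hcover : S ⊆ ((⋃ k ∈ Finset.range M, T k) ∪
      ((⋃ k ∈ Finset.range (M - 1), U (k + 1)) ∪ (U 0 ∪ U M))) := by
    intro i hi
    have hxi : x i ∈ Set.Icc A B := hi
    by_cases hex : ∃ k ≤ M, x (i - 1) < p k ∧ p k < x (i + 1)
    · obtain ⟨k, hkM, hk1, hk2⟩ := hex
      right
      rcases Nat.eq_zero_or_pos k with rfl | hk0
      · right; left; exact ⟨hxi, hk1, hk2⟩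
      rcases eq_or_lt_of_le hkM with rfl | hkM'
      · right; right; exact ⟨hxi, hk1, hk2⟩
      · left
        simp only [Set.mem_iUnion]
        refine ⟨k - 1, Finset.mem_range.mpr (by omega), ?_⟩
        have : k - 1 + 1 = k := by omega
        rw [this]
        exact ⟨hxi, hk1, hk2⟩
    · push_neg at hex
      have hk : ∀ k ≤ M, p k ≤ x (i - 1) ∨ x (i + 1) ≤ p k := by
        intro k hkM
        rcases le_or_gt (p k) (x (i - 1)) with h | h
        · exact Or.inl h
        · exact Or.inr (hex k hkM h)
      have h0 : p 0 ≤ x (i - 1) := by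
        rcases hk 0 (Nat.zero_le M) with h | h
        · exact h
        · exfalso
          have : x i < x (i + 1) := hx (by omega)
          rw [hp0] at h
          linarith [hxi.1]
      set k₀ := Nat.findGreatest (fun k => p k ≤ x (i - 1)) M with hk₀
      have hspec : p k₀ ≤ x (i - 1) :=
        Nat.findGreatest_spec (P := fun k => p k ≤ x (i - 1)) (Nat.zero_le M) h0
      have hk₀le : k₀ ≤ M := Nat.findGreatest_le M
      have hk₀ne : k₀ ≠ M := by
        intro heq
        have : x (i - 1) < x i := hx (by omega)
        rw [heq, hpM] at hspec
        linarith [hxi.2]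
      have hk₀lt : k₀ < M := lt_of_le_of_ne hk₀le hk₀ne
      have hng : ¬ p (k₀ + 1) ≤ x (i - 1) :=
        Nat.findGreatest_is_greatest (P := fun k => p k ≤ x (i - 1)) (n := M)
          (by omega) (by omega)
      have hxup : x (i + 1) ≤ p (k₀ + 1) := by
        rcases hk (k₀ + 1) (by omega) with h | h
        · exact absurd h hng
        · exact h
      left
      simp only [Set.mem_iUnion]
      exact ⟨k₀, Finset.mem_range.mpr hk₀lt, hxi, hspec, hxup⟩
  -- counting each T k
  have hTcount : ∀ k < M, (T k).Finite ∧ ((T k).ncard : ℝ) ≤ 2 * (σ - 1) / α := by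
    intro k _
    have hpk := hppos k
    have hbound : ∀ i ∈ T k, p k + α * p k ≤ x (i + 1) ∧ x (i + 1) ≤ p (k + 1) := by
      rintro i ⟨hxi, hlo, hhi⟩
      refine ⟨?_, hhi⟩
      have hg := hgap' i hxi
      have hxik : p k ≤ x i := le_of_lt (lt_of_le_of_lt hlo (hx (by omega)))
      nlinarith
    have hspace : ∀ i ∈ T k, ∀ j ∈ T k, i + 2 ≤ j →
        x (i + 1) + α * p k ≤ x (j + 1) := by
      rintro i ⟨hxi, hloi, hhii⟩ j ⟨hxj, hloj, hhij⟩ hij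
      have hg := hgap' j hxj
      have hxjk : p k ≤ x j := le_of_lt (lt_of_le_of_lt hloj (hx (by omega)))
      have hmono : x (i + 1) ≤ x (j - 1) := hx.monotone (by omega)
      nlinarith
    obtain ⟨hfin, hcard⟩ := spaced_count (T k) (fun i => x (i + 1)) (p k) (p (k + 1))
      (α * p k) (by positivity) (le_of_lt (hpmono k)) hbound hspace
    refine ⟨hfin, hcard.trans (le_of_eq ?_)⟩
    rw [hp]
    have h1 : σ ^ (k + 1) * A - σ ^ k * A = σ ^ k * A * (σ - 1) := by ring
    rw [h1]
    rw [div_eq_div_iff (by positivity : (0:ℝ) < α * (σ ^ k * A)).ne' hα.ne']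
    ring
  -- counting each U k (middle)
  have hUpair : ∀ k, (U k).Finite ∧ ((U k).ncard : ℝ) ≤ 2 := by
    intro k
    have := set_pair_count (U k) (by
      rintro i ⟨_, _, hi2⟩ j ⟨_, hj1, _⟩ hij
      have : x (j - 1) < x (i + 1) := lt_trans hj1 hi2
      have := hx.lt_iff_lt.mp this
      omega)
    exact ⟨this.1, by exact_mod_cast this.2⟩
  have hU0 : (U 0).Finite ∧ ((U 0).ncard : ℝ) ≤ 1 := by
    have := set_single_count (U 0) (by
      rintro i ⟨hxi, _, _⟩ j ⟨hxj, hj1, _⟩ hij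
      rw [hp0] at hj1
      have h1 : x i ≤ x (j - 1) := hx.monotone (by omega)
      linarith [hxi.1])
    exact ⟨this.1, by exact_mod_cast this.2⟩
  have hUM : (U M).Finite ∧ ((U M).ncard : ℝ) ≤ 1 := by
    have := set_single_count (U M) (by
      rintro i ⟨hxi, _, hi2⟩ j ⟨hxj, _, _⟩ hij
      rw [hpM] at hi2
      have h1 : x (i + 1) ≤ x j := hx.monotone (by omega)
      linarith [hxj.2])
    exact ⟨this.1, by exact_mod_cast this.2⟩
  -- assemble
  obtain ⟨hTfin, hTcard⟩ := union_count M T (fun _ => 2 * (σ - 1) / α) hTcount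
  obtain ⟨hUfin, hUcard⟩ := union_count (M - 1) (fun k => U (k + 1)) (fun _ => 2)
    (fun k _ => hUpair (k + 1))
  have hTsum : ∑ _k ∈ Finset.range M, (2 * (σ - 1) / α) = (M : ℝ) * (2 * (σ - 1) / α) := by
    rw [Finset.sum_const, Finset.card_range, nsmul_eq_mul]
  have hUsum : ∑ _k ∈ Finset.range (M - 1), (2 : ℝ) = ((M : ℝ) - 1) * 2 := by
    rw [Finset.sum_const, Finset.card_range, nsmul_eq_mul]
    congr 1
    have : ((M - 1 : ℕ) : ℝ) = (M : ℝ) - 1 := by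
      rw [Nat.cast_sub hM]; simp
    rw [this]
  rw [hTsum] at hTcard
  rw [hUsum] at hUcard
  have hbig : ((⋃ k ∈ Finset.range M, T k) ∪
      ((⋃ k ∈ Finset.range (M - 1), U (k + 1)) ∪ (U 0 ∪ U M))).Finite :=
    hTfin.union (hUfin.union (hU0.1.union hUM.1))
  have hSfin : S.Finite := hbig.subset hcover
  refine ⟨hSfin, ?_, ?_⟩
  · have hSle : (S.ncard : ℝ) ≤ ((((⋃ k ∈ Finset.range M, T k) ∪
        ((⋃ k ∈ Finset.range (M - 1), U (k + 1)) ∪ (U 0 ∪ U M))).ncard : ℕ) : ℝ) := by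
      exact_mod_cast Set.ncard_le_ncard hcover hbig
    have step1 : ((((⋃ k ∈ Finset.range M, T k) ∪
        ((⋃ k ∈ Finset.range (M - 1), U (k + 1)) ∪ (U 0 ∪ U M))).ncard : ℕ) : ℝ) ≤
        (M : ℝ) * (2 * (σ - 1) / α) + (((M : ℝ) - 1) * 2 + (1 + 1)) := by
      have u1 : ((U 0 ∪ U M).ncard : ℝ) ≤ 1 + 1 := by
        calc ((U 0 ∪ U M).ncard : ℝ) ≤ ((U 0).ncard : ℝ) + ((U M).ncard : ℝ) := by
              exact_mod_cast Set.ncard_union_le _ _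
          _ ≤ 1 + 1 := add_le_add hU0.2 hUM.2
      have u2 : (((⋃ k ∈ Finset.range (M - 1), U (k + 1)) ∪ (U 0 ∪ U M)).ncard : ℝ) ≤
          ((M : ℝ) - 1) * 2 + (1 + 1) := by
        calc (((⋃ k ∈ Finset.range (M - 1), U (k + 1)) ∪ (U 0 ∪ U M)).ncard : ℝ)
            ≤ ((⋃ k ∈ Finset.range (M - 1), U (k + 1)).ncard : ℝ) +
              ((U 0 ∪ U M).ncard : ℝ) := by exact_mod_cast Set.ncard_union_le _ _
          _ ≤ ((M : ℝ) - 1) * 2 + (1 + 1) := add_le_add hUcard u1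
      calc ((((⋃ k ∈ Finset.range M, T k) ∪
          ((⋃ k ∈ Finset.range (M - 1), U (k + 1)) ∪ (U 0 ∪ U M))).ncard : ℕ) : ℝ)
          ≤ ((⋃ k ∈ Finset.range M, T k).ncard : ℝ) +
            (((⋃ k ∈ Finset.range (M - 1), U (k + 1)) ∪ (U 0 ∪ U M)).ncard : ℝ) := by
              exact_mod_cast Set.ncard_union_le _ _
        _ ≤ (M : ℝ) * (2 * (σ - 1) / α) + (((M : ℝ) - 1) * 2 + (1 + 1)) :=
              add_le_add hTcard u2
    have hM1 : (1 : ℝ) ≤ (M : ℝ) := by exact_mod_cast hM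
    calc (S.ncard : ℝ) ≤ (M : ℝ) * (2 * (σ - 1) / α) + (((M : ℝ) - 1) * 2 + (1 + 1)) :=
          hSle.trans step1
      _ = 2 * (M : ℝ) * (σ - 1) / α + 2 * (M : ℝ) := by ring
  · have hMpos : (0 : ℝ) ≤ (M : ℝ) := Nat.cast_nonneg M
    have key : 2 * (M : ℝ) * (σ - 1) / α ≤ 2 * (M : ℝ) * (Real.exp 2 - 1) / α :=
      (div_le_div_iff_of_pos_right hα).mpr (by nlinarith)
    have : (M : ℝ) * (2 * (Real.exp 2 - 1) / α + 2) =
        2 * (M : ℝ) * (Real.exp 2 - 1) / α + 2 * (M : ℝ) := by ring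
    rw [this]
    linarith
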